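/- arXiv:0907.0877 — 7 statements merged into one kernel-verified Lean document; each statement's English description precedes it below -/
import Mathlib

section
/- If K and L are prefix languages over a linearly ordered alphabet such that (K, <ₗ) and (L, <ₗ) are well-ordered, then (KL, <ₗ) is well-ordered and its order type equals o(L) · o(K) (the product of the order type of L by the order type of K, in that order). -/
/-- The branching (strict) order on words: `u <ₛ v` iff they have a common
prefix followed by letters `a < b`. -/
def BranchLT {A : Type*} [LinearOrder A] (u v : List A) : Prop :=
  ∃ (w : List A) (a b : A) (u' v' : List A),
    a < b ∧ u = w ++ a :: u' ∧ v = w ++ b :: v'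

/-- The proper-prefix order on words. -/
def PrefLT {A : Type*} [LinearOrder A] (u v : List A) : Prop :=
  u <+: v ∧ u ≠ v

/-- The lexicographic order: proper prefix or branching. -/
def WordLex {A : Type*} [LinearOrder A] (u v : List A) : Prop :=
  PrefLT u v ∨ BranchLT u v

/-- A prefix language: no member is a proper prefix of another member. -/
def IsPrefixLang {A : Type*} [LinearOrder A] (L : Set (List A)) : Prop :=
  ∀ u ∈ L, ∀ v : List A, u ++ v ∈ L → v = []

/-- The lexicographic order restricted to a set of words. -/
def subLex {A : Type*} [LinearOrder A] (L : Set (List A)) : ↥L → ↥L → Prop :=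
  fun a b => WordLex a.1 b.1

/-- Elementwise concatenation of two languages. -/
def LangConcat {A : Type*} (K L : Set (List A)) : Set (List A) :=
  { w | ∃ u ∈ K, ∃ v ∈ L, w = u ++ v }

/-- `n`-fold concatenation power of a language. -/
def LangPow {A : Type*} (L : Set (List A)) : ℕ → Set (List A)
  | 0 => {[]}
  | n + 1 => LangConcat L (LangPow L n)

section Aux
variable {A : Type*} [LinearOrder A]

theorem wordLex_iff_lex (u v : List A) : WordLex u v ↔ List.Lex (· < ·) u v := by
  constructor
  · rintro (⟨⟨t, rfl⟩, hne⟩ | ⟨w, a, b, u', v', hab, rfl, rfl⟩)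
    · cases t with
      | nil => simp at hne
      | cons c t =>
        induction u with
        | nil => exact List.Lex.nil
        | cons x u ih => exact List.Lex.cons (by simpa using ih (by simp_all))
    · exact List.Lex.append_left _ (List.Lex.rel hab) w
  · intro h
    induction h with
    | nil => exact Or.inl ⟨⟨_, rfl⟩, by simp⟩
    | @cons a l₁ l₂ h ih =>
      rcases ih with ⟨⟨t, rfl⟩, hne⟩ | ⟨w, x, y, u', v', hxy, rfl, rfl⟩
      · exact Or.inl ⟨⟨t, rfl⟩, by simpa using fun h => hne (by simp [h])⟩
      · exact Or.inr ⟨a :: w, x, y, u', v', hxy, rfl, rfl⟩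
    | @rel a l₁ b l₂ h => exact Or.inr ⟨[], a, b, l₁, l₂, h, rfl, rfl⟩

theorem branch_append {u₁ u₂ : List A} (v₁ v₂ : List A) (h : BranchLT u₁ u₂) :
    List.Lex (· < ·) (u₁ ++ v₁) (u₂ ++ v₂) := by
  obtain ⟨w, a, b, u', v', hab, rfl, rfl⟩ := h
  rw [List.append_assoc, List.append_assoc]
  exact List.Lex.append_left _ (List.Lex.rel hab) w

theorem lex_cancel_left : ∀ (u : List A) {v₁ v₂ : List A},
    List.Lex (· < ·) (u ++ v₁) (u ++ v₂) → List.Lex (· < ·) v₁ v₂ := by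
  intro u
  induction u with
  | nil => exact fun h => h
  | cons x u ih => exact fun h => ih (List.lex_cons_iff.1 h)

end Aux


/-- If `K` and `L` are prefix languages that are well-ordered by the
lexicographic order, then so is `KL`, and `o(KL) = o(L) * o(K)`. -/
theorem stmt5 {A : Type*} [LinearOrder A] (K L : Set (List A))
    (hK : IsPrefixLang K) (hL : IsPrefixLang L)
    (wK : IsWellOrder ↥K (subLex K)) (wL : IsWellOrder ↥L (subLex L)) :
    ∃ w : IsWellOrder ↥(LangConcat K L) (subLex (LangConcat K L)),
      @Ordinal.type _ _ w = @Ordinal.type _ _ wL * @Ordinal.type _ _ wK := by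
  classical
  haveI : IsTrichotomous (List A) (List.Lex ((· < ·) : A → A → Prop)) :=
    List.Lex.trichotomous _
  haveI := wK; haveI := wL
  -- unique decomposition
  have uniq : ∀ u₁ ∈ K, ∀ u₂ ∈ K, ∀ v₁ v₂ : List A,
      u₁ ++ v₁ = u₂ ++ v₂ → u₁ = u₂ := by
    intro u₁ h₁ u₂ h₂ v₁ v₂ he
    have hp : u₁ <+: u₂ ∨ u₂ <+: u₁ := by
      rcases List.prefix_or_prefix_of_prefix (List.prefix_append u₁ v₁)
        (he ▸ List.prefix_append u₂ v₂) with h | h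
      · exact Or.inl h
      · exact Or.inr h
    rcases hp with ⟨t, rfl⟩ | ⟨t, rfl⟩
    · rw [hK u₁ h₁ t h₂, List.append_nil]
    · rw [hK u₂ h₂ t h₁, List.append_nil]
  have branch_of_lex : ∀ u₁ ∈ K, ∀ u₂ ∈ K, List.Lex (· < ·) u₁ u₂ → BranchLT u₁ u₂ := by
    intro u₁ h₁ u₂ h₂ h
    rcases (wordLex_iff_lex u₁ u₂).2 h with ⟨⟨t, rfl⟩, hne⟩ | hb
    · exact absurd (by rw [hK u₁ h₁ t h₂, List.append_nil]) hne
    · exact hb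
  -- the bijection
  set f : ↥K × ↥L → ↥(LangConcat K L) :=
    fun p => ⟨p.1.1 ++ p.2.1, ⟨p.1.1, p.1.2, p.2.1, p.2.2, rfl⟩⟩ with hf
  have hbij : Function.Bijective f := by
    constructor
    · rintro ⟨⟨u₁, h₁⟩, ⟨v₁, hv₁⟩⟩ ⟨⟨u₂, h₂⟩, ⟨v₂, hv₂⟩⟩ he
      have he' : u₁ ++ v₁ = u₂ ++ v₂ := congrArg Subtype.val he
      have hu : u₁ = u₂ := uniq u₁ h₁ u₂ h₂ v₁ v₂ he'
      subst hu
      have hv : v₁ = v₂ := List.append_cancel_left he'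
      subst hv; rfl
    · rintro ⟨w, u, hu, v, hv, rfl⟩
      exact ⟨⟨⟨u, hu⟩, ⟨v, hv⟩⟩, rfl⟩
  -- relation isomorphism
  have iso : Prod.Lex (subLex K) (subLex L) ≃r subLex (LangConcat K L) := by
    refine ⟨Equiv.ofBijective f hbij, ?_⟩
    rintro ⟨⟨u₁, h₁⟩, ⟨v₁, hv₁⟩⟩ ⟨⟨u₂, h₂⟩, ⟨v₂, hv₂⟩⟩
    show WordLex (u₁ ++ v₁) (u₂ ++ v₂) ↔ _
    rw [wordLex_iff_lex, Prod.lex_def]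
    constructor
    · intro h
      by_cases hu : u₁ = u₂
      · subst hu
        exact Or.inr ⟨rfl, (wordLex_iff_lex _ _).2 (lex_cancel_left u₁ h)⟩
      · rcases trichotomous_of (List.Lex (· < ·)) u₁ u₂ with h' | h' | h'
        · exact Or.inl ((wordLex_iff_lex _ _).2 h')
        · exact absurd h' hu
        · exact absurd (branch_append v₂ v₁ (branch_of_lex u₂ h₂ u₁ h₁ h'))
            (asymm h)
    · rintro (h | ⟨he, h⟩)
      · exact branch_append v₁ v₂
          (branch_of_lex u₁ h₁ u₂ h₂ ((wordLex_iff_lex _ _).1 h))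
      · have : u₁ = u₂ := congrArg Subtype.val he
        subst this
        exact List.Lex.append_left _ ((wordLex_iff_lex _ _).1 h) u₁
  have wo : IsWellOrder ↥(LangConcat K L) (subLex (LangConcat K L)) :=
    iso.symm.toRelEmbedding.isWellOrder
  refine ⟨wo, ?_⟩
  rw [← Ordinal.type_prod_lex]
  exact Quotient.sound ⟨iso.symm⟩
end

section
/- Let L ⊆ {0,1}* be a prefix language such that (L, <ₗ) is well-ordered with order type α > 1. Then the language L∞ = ⋃_{n ≥ 0} 1ⁿ0Lⁿ (all words 1ⁿ0u with u ∈ Lⁿ) is a prefix language, (L∞, <ₗ) is well-ordered, and its order type is α^ω. -/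
section General

variable {A : Type*} [LinearOrder A]

lemma lex_append_right (u : List A) {t : List A} (ht : t ≠ []) :
    List.Lex (· < ·) u (u ++ t) := by
  induction u with
  | nil =>
    cases t with
    | nil => exact absurd rfl ht
    | cons c t' => exact List.Lex.nil
  | cons a u ih => exact List.Lex.cons ih

lemma branch_lex {a b : A} (w : List A) (hab : a < b) (u' v' : List A) :
    List.Lex (· < ·) (w ++ a :: u') (w ++ b :: v') := by
  induction w with
  | nil => exact List.Lex.rel hab
  | cons c w ih => exact List.Lex.cons ih

lemma wordLex_iff {u v : List A} : WordLex u v ↔ List.Lex (· < ·) u v := by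
  constructor
  · rintro (⟨⟨t, rfl⟩, hne⟩ | ⟨w, a, b, u', v', hab, rfl, rfl⟩)
    · apply lex_append_right
      rintro rfl
      simp at hne
    · exact branch_lex w hab _ _
  · intro h
    induction h with
    | nil => exact Or.inl ⟨⟨_, rfl⟩, by simp⟩
    | @rel a l₁ b l₂ h => exact Or.inr ⟨[], a, b, l₁, l₂, h, rfl, rfl⟩
    | @cons a l₁ l₂ h ih =>
      rcases ih with ⟨⟨t, rfl⟩, hne⟩ | ⟨w, x, y, u', v', hxy, rfl, rfl⟩
      · refine Or.inl ⟨⟨t, rfl⟩, fun hEq => hne ?_⟩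
        injection hEq
      · exact Or.inr ⟨a :: w, x, y, u', v', hxy, rfl, rfl⟩

lemma wordLex_irrefl (u : List A) : ¬ WordLex u u := by
  rw [wordLex_iff]
  exact irrefl_of (List.Lex (· < ·)) u

lemma wordLex_asymm {u v : List A} (h : WordLex u v) : ¬ WordLex v u := by
  rw [wordLex_iff] at h ⊢
  exact asymm_of (List.Lex (· < ·)) h

lemma wordLex_trans {u v w : List A} (h₁ : WordLex u v) (h₂ : WordLex v w) :
    WordLex u w := by
  rw [wordLex_iff] at h₁ h₂ ⊢
  exact List.lex_trans lt_trans h₁ h₂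

lemma wordLex_trichot {u v : List A} (h : u ≠ v) : WordLex u v ∨ WordLex v u := by
  rw [wordLex_iff, wordLex_iff]
  rcases @trichotomous (List A) (List.Lex (· < ·)) _ u v with h' | h' | h'
  · exact Or.inl h'
  · exact absurd h' h
  · exact Or.inr h'

lemma wordLex_append_left {w u v : List A} :
    WordLex (w ++ u) (w ++ v) ↔ WordLex u v := by
  rw [wordLex_iff, wordLex_iff]
  induction w with
  | nil => rfl
  | cons a w ih => rw [List.cons_append, List.cons_append, List.lex_cons_iff, ih]

instance subLex_isTrans (S : Set (List A)) : IsTrans ↥S (subLex S) :=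
  ⟨fun _ _ _ h₁ h₂ => wordLex_trans h₁ h₂⟩

instance subLex_isIrrefl (S : Set (List A)) : IsIrrefl ↥S (subLex S) :=
  ⟨fun a => wordLex_irrefl a.1⟩

instance subLex_isAsymm (S : Set (List A)) : IsAsymm ↥S (subLex S) :=
  ⟨fun _ _ h => wordLex_asymm h⟩

instance subLex_isTrichotomous (S : Set (List A)) : IsTrichotomous ↥S (subLex S) :=
  ⟨fun a b => by
    rcases eq_or_ne a b with rfl | h
    · exact fun _ _ => rfl
    · rcases wordLex_trichot (fun h' => h (Subtype.ext h')) with h' | h'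
      · exact fun h1 _ => absurd h' h1
      · exact fun _ h2 => absurd h' h2⟩

lemma prefix_comparable {u₁ u₂ v₁ v₂ : List A} (h : u₁ ++ v₁ = u₂ ++ v₂) :
    u₁ <+: u₂ ∨ u₂ <+: u₁ := by
  rcases List.append_eq_append_iff.1 h with ⟨a, ha, _⟩ | ⟨a, ha, _⟩
  · exact Or.inl ⟨a, ha.symm⟩
  · exact Or.inr ⟨a, ha.symm⟩

lemma IsPrefixLang.eq_of_prefix {L : Set (List A)} (hL : IsPrefixLang L)
    {u₁ u₂ : List A} (h₁ : u₁ ∈ L) (h₂ : u₂ ∈ L) (h : u₁ <+: u₂) : u₁ = u₂ := by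
  obtain ⟨t, rfl⟩ := h
  rw [hL u₁ h₁ t h₂, List.append_nil]

lemma IsPrefixLang.concat_eq {L : Set (List A)} (hL : IsPrefixLang L)
    {u₁ u₂ v₁ v₂ : List A} (h₁ : u₁ ∈ L) (h₂ : u₂ ∈ L)
    (h : u₁ ++ v₁ = u₂ ++ v₂) : u₁ = u₂ ∧ v₁ = v₂ := by
  have hu : u₁ = u₂ := by
    rcases prefix_comparable h with h' | h'
    · exact hL.eq_of_prefix h₁ h₂ h'
    · exact (hL.eq_of_prefix h₂ h₁ h').symm
  subst hu
  exact ⟨rfl, List.append_cancel_left h⟩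

lemma IsPrefixLang.pow {L : Set (List A)} (hL : IsPrefixLang L) :
    ∀ n, IsPrefixLang (LangPow L n)
  | 0 => by
    intro u hu v hv
    simp only [LangPow, Set.mem_singleton_iff] at hu hv
    subst hu
    simpa using hv
  | n + 1 => by
    rintro u hu v hv
    obtain ⟨a, ha, b, hb, rfl⟩ := hu
    obtain ⟨a', ha', b', hb', he⟩ := hv
    rw [List.append_assoc] at he
    obtain ⟨rfl, he'⟩ := hL.concat_eq ha ha' he
    exact hL.pow n b hb v (he' ▸ hb')

lemma branchLT_append {u₁ u₂ : List A} (h : BranchLT u₁ u₂) (v₁ v₂ : List A) :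
    BranchLT (u₁ ++ v₁) (u₂ ++ v₂) := by
  obtain ⟨w, a, b, x, y, hab, rfl, rfl⟩ := h
  exact ⟨w, a, b, x ++ v₁, y ++ v₂, hab, by simp, by simp⟩

lemma IsPrefixLang.branch {L : Set (List A)} (hL : IsPrefixLang L)
    {u₁ u₂ : List A} (h₁ : u₁ ∈ L) (h₂ : u₂ ∈ L) (h : WordLex u₁ u₂) :
    BranchLT u₁ u₂ := by
  rcases h with ⟨hp, hne⟩ | h
  · exact absurd (hL.eq_of_prefix h₁ h₂ hp) hne
  · exact h

lemma IsPrefixLang.wordLex_concat {L : Set (List A)} (hL : IsPrefixLang L)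
    {u₁ u₂ : List A} (h₁ : u₁ ∈ L) (h₂ : u₂ ∈ L) (v₁ v₂ : List A) :
    WordLex (u₁ ++ v₁) (u₂ ++ v₂) ↔ (WordLex u₁ u₂ ∨ (u₁ = u₂ ∧ WordLex v₁ v₂)) := by
  constructor
  · intro h
    by_contra hc
    push_neg at hc
    obtain ⟨hc₁, hc₂⟩ := hc
    rcases eq_or_ne u₁ u₂ with rfl | hne
    · rcases eq_or_ne v₁ v₂ with rfl | hne'
      · exact wordLex_irrefl _ h
      · rcases wordLex_trichot hne' with h' | h'
        · exact hc₂ rfl h'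
        · exact wordLex_asymm h (wordLex_append_left.2 h')
    · rcases wordLex_trichot hne with h' | h'
      · exact hc₁ h'
      · exact wordLex_asymm h (Or.inr (branchLT_append (hL.branch h₂ h₁ h') v₂ v₁))
  · rintro (h | ⟨rfl, h⟩)
    · exact Or.inr (branchLT_append (hL.branch h₁ h₂ h) v₁ v₂)
    · exact wordLex_append_left.2 h

end General

section General2

open Ordinal

lemma wordLex_append_left' {A : Type*} [LinearOrder A] {w u v : List A} (a : A) :
    WordLex (w ++ a :: u) (w ++ a :: v) ↔ WordLex u v := by
  have hrw : ∀ z : List A, w ++ a :: z = (w ++ [a]) ++ z := by simp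
  rw [hrw u, hrw v, wordLex_append_left]

lemma type_le_of_forall_lt {β : Type*} {r : β → β → Prop} [IsWellOrder β r] {c : Ordinal}
    (f : β → Ordinal) (hm : ∀ a b, r a b → f a < f b) (hb : ∀ b, f b < c) :
    Ordinal.type r ≤ c := by
  haveI : IsWellOrder c.ToType (· < ·) := isWellOrder_lt
  refine le_trans ?_ (le_of_eq (Ordinal.type_toType c))
  refine Ordinal.type_le_iff'.2 ⟨RelEmbedding.ofMonotone
    (fun b => Ordinal.enum ((· < ·) : c.ToType → c.ToType → Prop)
      ⟨f b, by rw [Ordinal.type_toType]; exact hb b⟩) ?_⟩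
  intro a b h
  exact Ordinal.enum_lt_enum.2 (Subtype.mk_lt_mk.2 (hm a b h))

lemma block_eq : ∀ {n m : ℕ} {x y : List Bool},
    List.replicate n true ++ false :: x = List.replicate m true ++ false :: y →
    n = m ∧ x = y := by
  intro n
  induction n with
  | zero =>
    intro m x y h
    cases m with
    | zero => simpa using h
    | succ m => simp [List.replicate_succ] at h
  | succ n ih =>
    intro m x y h
    cases m with
    | zero => simp [List.replicate_succ] at h
    | succ m =>
      simp only [List.replicate_succ, List.cons_append, List.cons.injEq, true_and] at h
      obtain ⟨h1, h2⟩ := ih h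
      exact ⟨by omega, h2⟩

lemma block_lt {n m : ℕ} (h : n < m) (x y : List Bool) :
    BranchLT (List.replicate n true ++ false :: x)
      (List.replicate m true ++ false :: y) := by
  obtain ⟨k, rfl⟩ : ∃ k, m = n + (k + 1) := ⟨m - n - 1, by omega⟩
  refine ⟨List.replicate n true, false, true, x,
    List.replicate k true ++ false :: y, by decide, rfl, ?_⟩
  rw [List.replicate_add, List.replicate_succ]
  simp

lemma langPow_type {L : Set (List Bool)} (hL : IsPrefixLang L)
    (wL : IsWellOrder ↥L (subLex L)) :
    ∀ n : ℕ, ∃ w : IsWellOrder ↥(LangPow L n) (subLex (LangPow L n)),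
      @Ordinal.type _ _ w = (@Ordinal.type _ _ wL) ^ n := by
  haveI := wL
  intro n
  induction n with
  | zero =>
    haveI hu : Unique ↥(LangPow L 0) :=
      show Unique ↥({[]} : Set (List Bool)) from inferInstance
    haveI : IsWellFounded ↥(LangPow L 0) (subLex (LangPow L 0)) := by
      refine ⟨⟨fun a => ⟨a, fun y hy => ?_⟩⟩⟩
      have : y = a := Subsingleton.elim _ _
      rw [this] at hy
      exact absurd hy (wordLex_irrefl a.1)
    haveI w0 : IsWellOrder ↥(LangPow L 0) (subLex (LangPow L 0)) := ⟨⟩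
    refine ⟨w0, ?_⟩
    rw [pow_zero]
    exact Ordinal.type_eq_one_iff_unique.2 ⟨hu⟩
  | succ n ih =>
    obtain ⟨wn, hn⟩ := ih
    haveI := wn
    have hbij : Function.Bijective (fun p : ↥L × ↥(LangPow L n) =>
        (⟨p.1.1 ++ p.2.1, ⟨p.1.1, p.1.2, p.2.1, p.2.2, rfl⟩⟩ : ↥(LangPow L (n+1)))) := by
      constructor
      · intro p q hpq
        have h := congrArg Subtype.val hpq
        obtain ⟨h1, h2⟩ := hL.concat_eq p.1.2 q.1.2 h
        exact Prod.ext (Subtype.ext h1) (Subtype.ext h2)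
      · rintro ⟨w, hw⟩
        obtain ⟨u, hu, v, hv, rfl⟩ := hw
        exact ⟨(⟨u, hu⟩, ⟨v, hv⟩), rfl⟩
    let φ : Prod.Lex (subLex L) (subLex (LangPow L n)) ≃r subLex (LangPow L (n+1)) :=
      { toEquiv := Equiv.ofBijective _ hbij
        map_rel_iff' := by
          rintro ⟨⟨u₁, h₁⟩, ⟨v₁, hv₁⟩⟩ ⟨⟨u₂, h₂⟩, ⟨v₂, hv₂⟩⟩
          show WordLex (u₁ ++ v₁) (u₂ ++ v₂) ↔ _
          rw [hL.wordLex_concat h₁ h₂, Prod.lex_def]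
          simp [subLex, Subtype.ext_iff] }
    haveI wn1 : IsWellOrder ↥(LangPow L (n+1)) (subLex (LangPow L (n+1))) :=
      φ.symm.toRelEmbedding.isWellOrder
    refine ⟨wn1, ?_⟩
    rw [← φ.ordinal_type_eq, Ordinal.type_prod_lex, hn, pow_succ]

end General2

/-- If `L ⊆ {0,1}*` is a prefix language well-ordered by `<ₗ` with order type
`α > 1`, then `L∞ = ⋃ₙ 1ⁿ0Lⁿ` is a prefix language, well-ordered by `<ₗ`,
with order type `α ^ ω`. Here `0 = false`, `1 = true`. -/
theorem stmt6 (L : Set (List Bool)) (hL : IsPrefixLang L)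
    (wL : IsWellOrder ↥L (subLex L))
    (hα : 1 < @Ordinal.type _ _ wL) :
    IsPrefixLang {w : List Bool | ∃ n : ℕ, ∃ u ∈ LangPow L n,
        w = List.replicate n true ++ false :: u} ∧
    ∃ w : IsWellOrder
        ↥{w : List Bool | ∃ n : ℕ, ∃ u ∈ LangPow L n,
            w = List.replicate n true ++ false :: u}
        (subLex _),
      @Ordinal.type _ _ w = (@Ordinal.type _ _ wL) ^ Ordinal.omega0 := by
  haveI := wL
  set α := @Ordinal.type _ _ wL with hαdef
  have key := langPow_type hL wL
  set S : Set (List Bool) := {w : List Bool | ∃ n : ℕ, ∃ u ∈ LangPow L n,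
      w = List.replicate n true ++ false :: u} with hSdef
  -- part 1 : prefix language
  have part1 : IsPrefixLang S := by
    rintro w ⟨n, u, hu, rfl⟩ v hv
    obtain ⟨m, u', hu', he⟩ := hv
    simp only [List.append_assoc, List.cons_append] at he
    obtain ⟨rfl, h2⟩ := block_eq he
    exact hL.pow n u hu v (h2.symm ▸ hu')
  refine ⟨part1, ?_⟩
  -- abbreviations
  have wpow : ∀ n, IsWellOrder ↥(LangPow L n) (subLex (LangPow L n)) :=
    fun n => (key n).choose
  have wtype : ∀ n, @Ordinal.type _ _ (wpow n) = α ^ n := fun n => (key n).choose_spec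
  -- partial sums of α ^ k
  set SS : ℕ → Ordinal := fun n => Nat.rec 0 (fun k ih => ih + α ^ k) n with hSS
  have SSsucc : ∀ n, SS (n + 1) = SS n + α ^ n := fun n => rfl
  have SSmono : ∀ {k l : ℕ}, k ≤ l → SS k ≤ SS l := by
    intro k l h
    induction l with
    | zero => rw [Nat.le_zero.1 h]
    | succ l ih =>
      rcases eq_or_lt_of_le h with rfl | h'
      · exact le_rfl
      · exact le_trans (ih (Nat.lt_succ_iff.1 h')) <| by
          rw [SSsucc]; exact le_self_add
  have hα0 : (0 : Ordinal) < α := lt_trans zero_lt_one hα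
  have h2α : (2 : Ordinal) ≤ α := by
    rw [← Ordinal.succ_one]; exact Order.succ_le_of_lt hα
  have SSle : ∀ n, SS n ≤ α ^ n := by
    intro n
    induction n with
    | zero => exact zero_le
    | succ n ih =>
      rw [SSsucc, pow_succ]
      calc SS n + α ^ n ≤ α ^ n + α ^ n := add_le_add_left ih _
        _ = α ^ n * 2 := by
          rw [show (2 : Ordinal) = 1 + 1 from (one_add_one_eq_two).symm, mul_add, mul_one]
        _ ≤ α ^ n * α := mul_le_mul_right h2α _
  -- the rank function
  have decomp : ∀ x : ↥S, ∃ n : ℕ, ∃ u : List Bool, ∃ _ : u ∈ LangPow L n,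
      x.1 = List.replicate n true ++ false :: u := by
    rintro ⟨w, n, u, hu, rfl⟩
    exact ⟨n, u, hu, rfl⟩
  choose N U hU hrep using decomp
  set f : ↥S → Ordinal :=
    fun x => SS (N x) + @Ordinal.typein _ _ (wpow (N x)) ⟨U x, hU x⟩ with hf
  have fspec : ∀ (n : ℕ) (u : List Bool) (hu : u ∈ LangPow L n) (x : ↥S),
      x.1 = List.replicate n true ++ false :: u →
      f x = SS n + @Ordinal.typein _ _ (wpow n) ⟨u, hu⟩ := by
    intro n u hu x hx
    obtain ⟨hn, hu'⟩ := block_eq ((hrep x).symm.trans hx)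
    subst hn
    subst hu'
    rfl
  have ftypein_lt : ∀ (n : ℕ) (u : List Bool) (hu : u ∈ LangPow L n),
      @Ordinal.typein _ _ (wpow n) ⟨u, hu⟩ < α ^ n := by
    intro n u hu
    have h := @Ordinal.typein_lt_type _ _ (wpow n) ⟨u, hu⟩
    rwa [wtype n] at h
  have fmono : ∀ x y : ↥S, subLex S x y → f x < f y := by
    intro x y h
    obtain ⟨n, u, hu, hx⟩ := x.2
    obtain ⟨m, v, hv, hy⟩ := y.2
    rw [fspec n u hu x hx, fspec m v hv y hy]
    rcases Nat.lt_trichotomy n m with hlt | rfl | hgt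
    · calc SS n + @Ordinal.typein _ _ (wpow n) ⟨u, hu⟩
          < SS n + α ^ n := add_lt_add_right (ftypein_lt n u hu) _
        _ = SS (n + 1) := (SSsucc n).symm
        _ ≤ SS m := SSmono hlt
        _ ≤ SS m + @Ordinal.typein _ _ (wpow m) ⟨v, hv⟩ := le_self_add
    · have hcan : WordLex u v := by
        have h' : WordLex (List.replicate n true ++ false :: u)
            (List.replicate n true ++ false :: v) := by
          rw [← hx, ← hy]; exact h
        exact (wordLex_append_left' false).1 h'
      have hcan' : subLex (LangPow L n) ⟨u, hu⟩ ⟨v, hv⟩ := hcan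
      exact add_lt_add_right
        ((@Ordinal.typein_lt_typein _ (subLex (LangPow L n)) (wpow n) ⟨u, hu⟩ ⟨v, hv⟩).2 hcan') _
    · exfalso
      have h2 : WordLex y.1 x.1 := by
        rw [hx, hy]
        exact Or.inr (block_lt hgt v u)
      exact wordLex_asymm h h2
  -- well order
  have wfS : WellFounded (subLex S) :=
    Subrelation.wf (fun {x y} h => fmono x y h) (InvImage.wf f Ordinal.lt_wf)
  haveI : IsWellFounded ↥S (subLex S) := ⟨wfS⟩
  haveI wS : IsWellOrder ↥S (subLex S) := ⟨⟩
  refine ⟨wS, le_antisymm ?_ ?_⟩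
  · -- type ≤ α ^ ω
    apply type_le_of_forall_lt f fmono
    intro x
    obtain ⟨n, u, hu, hx⟩ := x.2
    rw [fspec n u hu x hx]
    calc SS n + @Ordinal.typein _ _ (wpow n) ⟨u, hu⟩
        < SS n + α ^ n := add_lt_add_right (ftypein_lt n u hu) _
      _ = SS (n + 1) := (SSsucc n).symm
      _ ≤ α ^ (n + 1) := SSle (n + 1)
      _ = α ^ ((n + 1 : ℕ) : Ordinal) := (Ordinal.opow_natCast α (n + 1)).symm
      _ < α ^ Ordinal.omega0 :=
          (Ordinal.opow_lt_opow_iff_right hα).2 (Ordinal.nat_lt_omega0 (n + 1))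
  · -- α ^ ω ≤ type
    refine (Ordinal.opow_le_of_isSuccLimit (ne_of_gt hα0) Ordinal.isSuccLimit_omega0).2 ?_
    intro b hb
    obtain ⟨n, rfl⟩ := Ordinal.lt_omega0.1 hb
    rw [Ordinal.opow_natCast, ← wtype n]
    haveI := wpow n
    refine RelEmbedding.ordinal_type_le (RelEmbedding.ofMonotone
      (fun u => (⟨List.replicate n true ++ false :: u.1, ⟨n, u.1, u.2, rfl⟩⟩ : ↥S)) ?_)
    intro a b hab
    show WordLex (List.replicate n true ++ false :: a.1)
      (List.replicate n true ++ false :: b.1)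
    exact (wordLex_append_left' false).2 hab
end

section
/- If L ⊆ {0,1}* and (L, <ₗ) is not well-ordered, then there exists an infinite sequence (uₙ) of words in L such that u_{n+1} <ₛ uₙ for all n, i.e., an infinite strictly descending chain in the branching order. -/

lemma descending_of_not_wf {α : Type*} {r : α → α → Prop} (h : ¬ WellFounded r) :
    ∃ f : ℕ → α, ∀ n, r (f (n+1)) (f n) := by
  have hex : ∃ a, ¬ Acc r a := by
    by_contra hc; push_neg at hc; exact h ⟨hc⟩
  obtain ⟨a, ha⟩ := hex
  have H : ∀ x : {a // ¬ Acc r a}, ∃ y : {a // ¬ Acc r a}, r y.1 x.1 := by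
    rintro ⟨x, hx⟩
    obtain ⟨b, hb, hr⟩ := exists_not_acc_lt_of_not_acc hx
    exact ⟨⟨b, hb⟩, hr⟩
  choose g hg using H
  refine ⟨fun n => (g^[n] ⟨a, ha⟩).1, fun n => ?_⟩
  simp only [Function.iterate_succ']
  apply hg

lemma branchLT_of_prefix {A : Type*} [LinearOrder A] {u v V : List A}
    (h : BranchLT u v) (hp : v <+: V) : BranchLT u V := by
  obtain ⟨w, a, b, u', v', hab, hu, hv⟩ := h
  obtain ⟨t, ht⟩ := hp
  exact ⟨w, a, b, u', v' ++ t, hab, hu, by simp [← ht, hv]⟩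

/-- If `L ⊆ {0,1}*` is not well-ordered by the lexicographic order, then
there is an infinite strictly descending chain in the branching order. -/
theorem stmt7 (L : Set (List Bool))
    (h : ¬ L.WellFoundedOn (WordLex : List Bool → List Bool → Prop)) :
    ∃ u : ℕ → List Bool, (∀ n, u n ∈ L) ∧ ∀ n, BranchLT (u (n + 1)) (u n) := by
  classical
  have h' : ¬ WellFounded (fun (a b : ↥L) => WordLex a.1 b.1) := h
  obtain ⟨F, hF⟩ := descending_of_not_wf h'
  set f : ℕ → List Bool := fun n => (F n).1 with hf
  have hfL : ∀ n, f n ∈ L := fun n => (F n).2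
  have hstep : ∀ n, WordLex (f (n+1)) (f n) := fun n => hF n
  have pref_run : ∀ n k, (∀ i, i < k → PrefLT (f (n+i+1)) (f (n+i))) → f (n+k) <+: f n := by
    intro n k
    induction k with
    | zero => intro _; exact List.prefix_rfl
    | succ k ih =>
      intro hk
      have h1 : f (n+k+1) <+: f (n+k) := (hk k (by omega)).1
      exact h1.trans (ih fun i hi => hk i (by omega))
  have exists_branch : ∀ n, ∃ k, BranchLT (f (n+k+1)) (f (n+k)) := by
    intro n
    by_contra hc
    push_neg at hc
    have hpref : ∀ k, PrefLT (f (n+k+1)) (f (n+k)) := fun k =>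
      (hstep (n+k)).resolve_right (hc k)
    have hlen : ∀ k, (f (n+k)).length + k ≤ (f n).length := by
      intro k
      induction k with
      | zero => simp
      | succ k ih =>
        rw [show n + (k+1) = n + k + 1 from rfl]
        have h1 := hpref k
        have hle := h1.1.length_le
        have hne : (f (n+k+1)).length ≠ (f (n+k)).length := fun he =>
          h1.2 (h1.1.eq_of_length he)
        omega
    exact absurd (hlen ((f n).length + 1)) (by omega)
  have key : ∀ n, ∃ m, n < m ∧ BranchLT (f m) (f n) := by
    intro n
    have hex := exists_branch n
    have hbr : BranchLT (f (n + Nat.find hex + 1)) (f (n + Nat.find hex)) := Nat.find_spec hex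
    have hpre : f (n + Nat.find hex) <+: f n := pref_run n (Nat.find hex) (fun i hi =>
      (hstep (n+i)).resolve_right (Nat.find_min hex hi))
    exact ⟨n + Nat.find hex + 1, by omega, branchLT_of_prefix hbr hpre⟩
  choose g hg1 hg2 using key
  refine ⟨fun n => f (Nat.rec 0 (fun _ m => g m) n), fun n => hfL _, fun n => hg2 _⟩
end

section
/- Every set C of ordinals containing 0 and 1 that is closed under ordinal sum, ordinal product, and the ω-power operation α ↦ α^ω contains every ordinal less than ω^(ω^ω). -/
/-- Every set of ordinals containing `0` and `1` and closed under ordinal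
sum, ordinal product, and `ω`-power contains every ordinal less than
`ω ^ ω ^ ω`. -/
theorem stmt11 (C : Set Ordinal) (h0 : (0 : Ordinal) ∈ C)
    (h1 : (1 : Ordinal) ∈ C)
    (hadd : ∀ a ∈ C, ∀ b ∈ C, a + b ∈ C)
    (hmul : ∀ a ∈ C, ∀ b ∈ C, a * b ∈ C)
    (hpow : ∀ a ∈ C, a ^ Ordinal.omega0 ∈ C) :
    ∀ α : Ordinal, α < Ordinal.omega0 ^ Ordinal.omega0 ^ Ordinal.omega0 →
      α ∈ C := by
  have hnat : ∀ n : ℕ, (n : Ordinal) ∈ C := by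
    intro n
    induction n with
    | zero => simpa using h0
    | succ n ih => push_cast; exact hadd _ ih _ h1
  have homega : Ordinal.omega0 ∈ C := by
    have h2 : ((2 : ℕ) : Ordinal) ^ Ordinal.omega0 = Ordinal.omega0 :=
      Ordinal.natCast_opow_omega0 (by norm_num)
    have := hpow _ (hnat 2)
    rwa [h2] at this
  have key : ∀ n : ℕ,
      Ordinal.omega0 ^ (Ordinal.omega0 ^ (n : Ordinal)) ∈ C ∧
      ∀ α < Ordinal.omega0 ^ (Ordinal.omega0 ^ (n : Ordinal)), α ∈ C := by
    intro n
    induction n with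
    | zero =>
      refine ⟨by simpa using homega, ?_⟩
      intro α hα
      simp only [Nat.cast_zero, Ordinal.opow_zero, Ordinal.opow_one] at hα
      obtain ⟨m, rfl⟩ := Ordinal.lt_omega0.1 hα
      exact hnat m
    | succ n ih =>
      obtain ⟨hB, hlt⟩ := ih
      set B := Ordinal.omega0 ^ (Ordinal.omega0 ^ (n : Ordinal)) with hBdef
      have hB1 : 1 < B := by
        rw [hBdef]
        calc (1:Ordinal) < Ordinal.omega0 := Ordinal.one_lt_omega0
          _ = Ordinal.omega0 ^ (1:Ordinal) := (Ordinal.opow_one _).symm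
          _ ≤ _ := Ordinal.opow_le_opow_right Ordinal.omega0_pos
            (Order.one_le_iff_pos.2 (Ordinal.opow_pos _ Ordinal.omega0_pos))
      have hB0 : B ≠ 0 := (zero_lt_one.trans hB1).ne'
      have hBpow : ∀ k : ℕ, B ^ k ∈ C := by
        intro k
        induction k with
        | zero => simpa using h1
        | succ k ihk => rw [pow_succ]; exact hmul _ ihk _ hB
      have hstep : B ^ Ordinal.omega0 =
          Ordinal.omega0 ^ (Ordinal.omega0 ^ ((n + 1 : ℕ) : Ordinal)) := by
        rw [hBdef, ← Ordinal.opow_mul]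
        congr 1
        push_cast
        rw [Ordinal.opow_add, Ordinal.opow_one]
      have claim : ∀ k : ℕ, ∀ α < B ^ k, α ∈ C := by
        intro k
        induction k with
        | zero =>
          intro α hα
          simp only [pow_zero, Ordinal.lt_one_iff_zero] at hα
          simpa [hα] using h0
        | succ k ihk =>
          intro α hα
          have hBk0 : B ^ k ≠ 0 := pow_ne_zero _ hB0
          have hq : α / B ^ k < B := by
            rw [Ordinal.div_lt hBk0, ← pow_succ]
            exact hα
          have hr : α % B ^ k < B ^ k := Ordinal.mod_lt _ hBk0
          have := Ordinal.div_add_mod α (B ^ k)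
          rw [← this]
          exact hadd _ (hmul _ (hBpow k) _ (hlt _ hq)) _ (ihk _ hr)
      refine ⟨by rw [← hstep]; exact hpow _ hB, ?_⟩
      intro α hα
      rw [← hstep] at hα
      obtain ⟨c, hc, hαc⟩ := (Ordinal.lt_opow_of_isSuccLimit hB0 Ordinal.isSuccLimit_omega0).1 hα
      obtain ⟨k, rfl⟩ := Ordinal.lt_omega0.1 hc
      rw [Ordinal.opow_natCast] at hαc
      exact claim k α hαc
  intro α hα
  obtain ⟨c, hc, hαc⟩ :=
    (Ordinal.lt_opow_of_isSuccLimit Ordinal.omega0_ne_zero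
      (Ordinal.isSuccLimit_opow_left Ordinal.isSuccLimit_omega0 Ordinal.omega0_ne_zero)).1 hα
  obtain ⟨m, hm, hcm⟩ :=
    (Ordinal.lt_opow_of_isSuccLimit Ordinal.omega0_ne_zero Ordinal.isSuccLimit_omega0).1 hc
  obtain ⟨n, rfl⟩ := Ordinal.lt_omega0.1 hm
  have : α < Ordinal.omega0 ^ (Ordinal.omega0 ^ (n : Ordinal)) :=
    hαc.trans_le (Ordinal.opow_le_opow_right Ordinal.omega0_pos hcm.le)
  exact (key n).2 α this
end

section
/- In an ordinal grammar, if X ⇒* u·X·p and X ⇒* v·X·q with u, v terminal words and |u| ≤ |v|, then u is a prefix of v; in particular if |u| = |v| then u = v. -/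
/-- A context-free grammar over the terminal alphabet `{0,1}` (= `Bool`,
with `false = 0 < 1 = true`), with nonterminals `N`. -/
structure CFG (N : Type) where
  start : N
  prods : N → Set (List (N ⊕ Bool))

/-- One derivation step: replace an occurrence of a nonterminal by the
right-hand side of one of its productions. -/
def CFG.Step {N : Type} (G : CFG N) (p q : List (N ⊕ Bool)) : Prop :=
  ∃ (l r : List (N ⊕ Bool)) (X : N) (w : List (N ⊕ Bool)),
    p = l ++ Sum.inl X :: r ∧ w ∈ G.prods X ∧ q = l ++ w ++ r

/-- Derivation: the reflexive-transitive closure of `Step`. -/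
def CFG.Derives {N : Type} (G : CFG N) : List (N ⊕ Bool) → List (N ⊕ Bool) → Prop :=
  Relation.ReflTransGen G.Step

/-- View a terminal word as a sentential form. -/
def liftWord {N : Type} (u : List Bool) : List (N ⊕ Bool) := u.map Sum.inr

/-- The language of terminal words derivable from a sentential form `q`. -/
def CFG.lang {N : Type} (G : CFG N) (q : List (N ⊕ Bool)) : Set (List Bool) :=
  { u | G.Derives q (liftWord u) }

/-- The language of a nonterminal. -/
def CFG.langN {N : Type} (G : CFG N) (X : N) : Set (List Bool) :=
  G.lang [Sum.inl X]

/-- A nonterminal is accessible if it occurs in some sentential form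
derivable from the start symbol. -/
def CFG.Accessible {N : Type} (G : CFG N) (X : N) : Prop :=
  ∃ q r : List (N ⊕ Bool), G.Derives [Sum.inl G.start] (q ++ Sum.inl X :: r)

section Aux

variable {N : Type} (G : CFG N)

lemma step_ctx {p q : List (N ⊕ Bool)} (l r : List (N ⊕ Bool)) (h : G.Step p q) :
    G.Step (l ++ p ++ r) (l ++ q ++ r) := by
  obtain ⟨l', r', X, w, hp, hw, hq⟩ := h
  exact ⟨l ++ l', r' ++ r, X, w, by simp [hp], hw, by simp [hq]⟩

lemma derives_ctx {p q : List (N ⊕ Bool)} (l r : List (N ⊕ Bool)) (h : G.Derives p q) :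
    G.Derives (l ++ p ++ r) (l ++ q ++ r) := by
  induction h with
  | refl => exact Relation.ReflTransGen.refl
  | tail _ hstep ih => exact ih.tail (step_ctx G l r hstep)

lemma derives_append {p₁ q₁ p₂ q₂ : List (N ⊕ Bool)}
    (h₁ : G.Derives p₁ q₁) (h₂ : G.Derives p₂ q₂) :
    G.Derives (p₁ ++ p₂) (q₁ ++ q₂) := by
  have a := derives_ctx G [] p₂ h₁
  have b := derives_ctx G q₁ [] h₂
  simp at a b
  exact a.trans b

lemma liftWord_append {u v : List Bool} :
    (liftWord (u ++ v) : List (N ⊕ Bool)) = liftWord u ++ liftWord v := by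
  simp [liftWord]

lemma derives_terminal (hco : ∀ X : N, (G.langN X).Nonempty) :
    ∀ r : List (N ⊕ Bool), ∃ t : List Bool, G.Derives r (liftWord t) := by
  intro r
  induction r with
  | nil => exact ⟨[], Relation.ReflTransGen.refl⟩
  | cons c r ih =>
    obtain ⟨t, ht⟩ := ih
    cases c with
    | inl Y =>
      obtain ⟨z, hz⟩ := hco Y
      refine ⟨z ++ t, ?_⟩
      rw [liftWord_append]
      exact derives_append G hz ht
    | inr b =>
      refine ⟨b :: t, ?_⟩
      have : (liftWord (b :: t) : List (N ⊕ Bool)) = [Sum.inr b] ++ liftWord t := by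
        simp [liftWord]
      rw [this]
      exact derives_append (p₁ := [Sum.inr b]) G Relation.ReflTransGen.refl ht

/-- iterated word -/
def repW (x : List Bool) : ℕ → List Bool
  | 0 => []
  | n + 1 => repW x n ++ x

lemma derives_iter {X : N} {x : List Bool} {p : List (N ⊕ Bool)}
    (hx : G.Derives [Sum.inl X] (liftWord x ++ Sum.inl X :: p)) :
    ∀ n : ℕ, ∃ P : List (N ⊕ Bool),
      G.Derives [Sum.inl X] (liftWord (repW x n) ++ Sum.inl X :: P) := by
  intro n
  induction n with
  | zero => exact ⟨[], Relation.ReflTransGen.refl⟩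
  | succ n ih =>
    obtain ⟨P, hP⟩ := ih
    refine ⟨p ++ P, ?_⟩
    have h2 := derives_ctx G (liftWord (repW x n)) P hx
    have e1 : liftWord (repW x n) ++ [Sum.inl X] ++ P
        = liftWord (repW x n) ++ Sum.inl X :: P := by simp
    have e2 : liftWord (repW x n) ++ (liftWord x ++ Sum.inl X :: p) ++ P
        = liftWord (repW x (n+1)) ++ Sum.inl X :: (p ++ P) := by
      simp [repW, liftWord_append]
    rw [e1, e2] at h2
    exact hP.trans h2

/-- The key contradiction: two pumping derivations with branching seeds. -/
lemma no_branch {X : N}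
    (hacc : G.Accessible X)
    (hco : ∀ Y : N, (G.langN Y).Nonempty)
    (hwo : IsWellOrder ↥(G.langN G.start) (subLex (G.langN G.start)))
    {x y : List Bool} {p q : List (N ⊕ Bool)}
    (hx : G.Derives [Sum.inl X] (liftWord x ++ Sum.inl X :: p))
    (hy : G.Derives [Sum.inl X] (liftWord y ++ Sum.inl X :: q))
    (hb : BranchLT x y) : False := by
  -- words in L(X)
  have key : ∀ n : ℕ, ∃ t : List Bool, repW x n ++ y ++ t ∈ G.langN X := by
    intro n
    obtain ⟨P, hP⟩ := derives_iter G hx n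
    have h2 := derives_ctx G (liftWord (repW x n)) P hy
    have e1 : liftWord (repW x n) ++ [Sum.inl X] ++ P
        = liftWord (repW x n) ++ Sum.inl X :: P := by simp
    have e2 : liftWord (repW x n) ++ (liftWord y ++ Sum.inl X :: q) ++ P
        = liftWord (repW x n ++ y) ++ (Sum.inl X :: q ++ P) := by
      simp [liftWord_append]
    rw [e1, e2] at h2
    obtain ⟨t, ht⟩ := derives_terminal G hco (Sum.inl X :: q ++ P)
    refine ⟨t, ?_⟩
    have h3 : G.Derives (liftWord (repW x n ++ y) ++ (Sum.inl X :: q ++ P))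
        (liftWord (repW x n ++ y ++ t)) := by
      rw [show (liftWord (repW x n ++ y ++ t) : List (N ⊕ Bool))
          = liftWord (repW x n ++ y) ++ liftWord t by
        rw [← liftWord_append]]
      exact derives_append G Relation.ReflTransGen.refl ht
    have : G.Derives [Sum.inl X] (liftWord (repW x n ++ y ++ t)) :=
      (hP.trans h2).trans h3
    simpa [CFG.langN, CFG.lang, List.append_assoc] using this
  -- embed into L(start)
  obtain ⟨l, r, hlr⟩ := hacc
  obtain ⟨α, hα⟩ := derives_terminal G hco l
  obtain ⟨γ, hγ⟩ := derives_terminal G hco r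
  have emb : ∀ s : List Bool, s ∈ G.langN X → α ++ s ++ γ ∈ G.langN G.start := by
    intro s hs
    have h1 : G.Derives (l ++ Sum.inl X :: r) (liftWord (α ++ s ++ γ)) := by
      have : G.Derives (l ++ ([Sum.inl X] ++ r))
          (liftWord α ++ (liftWord s ++ liftWord γ)) :=
        derives_append G hα (derives_append G hs hγ)
      simpa [liftWord_append, List.append_assoc] using this
    exact hlr.trans h1
  choose t ht using key
  set f : ℕ → ↥(G.langN G.start) :=
    fun n => ⟨α ++ (repW x n ++ y ++ t n) ++ γ, emb _ (ht n)⟩ with hf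
  have hdec : ∀ n : ℕ, subLex (G.langN G.start) (f (n+1)) (f n) := by
    intro n
    obtain ⟨w, a, b, x', y', hab, hxw, hyw⟩ := hb
    refine Or.inr ⟨α ++ repW x n ++ w, a, b,
      x' ++ y ++ t (n+1) ++ γ, y' ++ t n ++ γ, hab, ?_, ?_⟩
    · show α ++ (repW x (n+1) ++ y ++ t (n+1)) ++ γ = _
      simp [repW, hxw]
    · show α ++ (repW x n ++ y ++ t n) ++ γ = _
      simp [hyw]
  exact (RelEmbedding.natGT f hdec).not_wellFounded hwo.wf

lemma list_compare {A : Type*} [LinearOrder A] (u v : List A) :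
    u <+: v ∨ v <+: u ∨ BranchLT u v ∨ BranchLT v u := by
  induction u generalizing v with
  | nil => exact Or.inl (List.nil_prefix)
  | cons a u' ih =>
    cases v with
    | nil => exact Or.inr (Or.inl List.nil_prefix)
    | cons b v' =>
      rcases lt_trichotomy a b with h|h|h
      · exact Or.inr (Or.inr (Or.inl ⟨[], a, b, u', v', h, rfl, rfl⟩))
      · subst h
        rcases ih v' with h|h|h|h
        · obtain ⟨t, ht⟩ := h; exact Or.inl ⟨t, by simp [← ht]⟩
        · obtain ⟨t, ht⟩ := h; exact Or.inr (Or.inl ⟨t, by simp [← ht]⟩)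
        · obtain ⟨w, c, d, x1, y1, hcd, hx1, hy1⟩ := h
          exact Or.inr (Or.inr (Or.inl ⟨a::w, c, d, x1, y1, hcd, by simp [hx1], by simp [hy1]⟩))
        · obtain ⟨w, c, d, x1, y1, hcd, hx1, hy1⟩ := h
          exact Or.inr (Or.inr (Or.inr ⟨a::w, c, d, x1, y1, hcd, by simp [hx1], by simp [hy1]⟩))
      · exact Or.inr (Or.inr (Or.inr ⟨[], b, a, v', u', h, rfl, rfl⟩))

end Aux

/-- In an ordinal grammar, if X ⇒* u·X·p and X ⇒* v·X·q with u, v terminal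
words and |u| ≤ |v|, then u is a prefix of v; in particular if |u| = |v|
then u = v. -/
theorem stmt15 {N : Type} (G : CFG N)
    (hacc : ∀ X : N, G.Accessible X)
    (hco : ∀ X : N, (G.langN X).Nonempty)
    (hpre : ∀ X : N, IsPrefixLang (G.langN X))
    (htwo : ∀ X : N, ∃ u v : List Bool, u ∈ G.langN X ∧ v ∈ G.langN X ∧ u ≠ v)
    (hwo : IsWellOrder ↥(G.langN G.start) (subLex (G.langN G.start)))
    (X : N) (u v : List Bool) (p q : List (N ⊕ Bool))
    (hu : G.Derives [Sum.inl X] (liftWord u ++ Sum.inl X :: p))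
    (hv : G.Derives [Sum.inl X] (liftWord v ++ Sum.inl X :: q))
    (hlen : u.length ≤ v.length) :
    u <+: v ∧ (u.length = v.length → u = v) := by
  rcases list_compare u v with h|h|h|h
  · exact ⟨h, fun hl => h.eq_of_length hl⟩
  · have hvu : v = u := h.eq_of_length (le_antisymm h.length_le hlen)
    subst hvu
    exact ⟨List.prefix_refl _, fun _ => rfl⟩
  · exact absurd (no_branch G (hacc X) hco hwo hu hv h) not_false
  · exact absurd (no_branch G (hacc X) hco hwo hv hu h) not_false
end

section
/- Let X be a recursive nonterminal of an ordinal grammar with pumping root u₀, and for n ≥ 0 let L(n, X) = { w ∈ L(X) : w = u₀ⁿ·x·0·y where x·1 is a prefix of u₀ }. If n < m, v ∈ L(n, X), and w ∈ L(m, X), then v <ₛ w. -/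
/-- The `n`-fold concatenation power of a word. -/
def wordPow (v : List Bool) : ℕ → List Bool
  | 0 => []
  | n + 1 => v ++ wordPow v n

/-- A primitive word: a nonempty word that is not a proper power. -/
def PrimitiveWord (w : List Bool) : Prop :=
  w ≠ [] ∧ ∀ (v : List Bool) (n : ℕ), 2 ≤ n → w ≠ wordPow v n

theorem wordPow_add (u : List Bool) (a b : ℕ) :
    wordPow u (a + b) = wordPow u a ++ wordPow u b := by
  induction a with
  | zero => simp [wordPow]
  | succ a ih => rw [Nat.succ_add]; simp [wordPow, ih]

/-- Let X be a recursive nonterminal of an ordinal grammar with pumping root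
u₀, and let L(n, X) = { w ∈ L(X) : w = u₀ⁿ·x·0·y with x·1 a prefix of u₀ }.
If n < m, v ∈ L(n, X) and w ∈ L(m, X), then v <ₛ w. -/
theorem stmt18 {N : Type} (G : CFG N)
    (hacc : ∀ X : N, G.Accessible X)
    (hco : ∀ X : N, (G.langN X).Nonempty)
    (hpre : ∀ X : N, IsPrefixLang (G.langN X))
    (htwo : ∀ X : N, ∃ u v : List Bool, u ∈ G.langN X ∧ v ∈ G.langN X ∧ u ≠ v)
    (hwo : IsWellOrder ↥(G.langN G.start) (subLex (G.langN G.start)))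
    (X : N) (u₀ : List Bool)
    (hprim : PrimitiveWord u₀)
    (hroot : ∀ (u : List Bool) (p : List (N ⊕ Bool)), u ≠ [] →
      G.Derives [Sum.inl X] (liftWord u ++ Sum.inl X :: p) →
      ∃ k : ℕ, 1 ≤ k ∧ u = wordPow u₀ k)
    (n m : ℕ) (hnm : n < m) (v w : List Bool)
    (hv : v ∈ G.langN X ∧ ∃ x y : List Bool,
      x ++ [true] <+: u₀ ∧ v = wordPow u₀ n ++ x ++ false :: y)
    (hw : w ∈ G.langN X ∧ ∃ x y : List Bool,
      x ++ [true] <+: u₀ ∧ w = wordPow u₀ m ++ x ++ false :: y) :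
    BranchLT v w := by
  obtain ⟨-, x, y, hx, hveq⟩ := hv
  obtain ⟨-, x', y', hx', hweq⟩ := hw
  obtain ⟨t, ht⟩ := hx
  obtain ⟨k, hk⟩ : ∃ k, m = n + (k + 1) := ⟨m - n - 1, by omega⟩
  refine ⟨wordPow u₀ n ++ x, false, true, y,
    t ++ wordPow u₀ k ++ x' ++ false :: y', by decide, by
      simpa using hveq, ?_⟩
  subst hk
  rw [hweq, wordPow_add]
  simp only [wordPow, ← ht]
  simp
end

section
/- In an ordinal grammar where each L(X) has at least two words, if X ⇒* q·Y·r·Z·s for nonterminals Y, Z with Y ≈ X and Z ≈ X (mutual reachability), then a contradiction follows; hence any sentential form derivable from X contains at most one nonterminal equivalent to X. -/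
/-- `Y ⪯ X`: the nonterminal `Y` occurs in some sentential form derivable
from `X`. -/
def CFG.Reaches {N : Type} (G : CFG N) (X Y : N) : Prop :=
  ∃ p q : List (N ⊕ Bool), G.Derives [Sum.inl X] (p ++ Sum.inl Y :: q)

/-- `X ≈ Y`: mutual reachability of nonterminals. -/
def CFG.Equiv {N : Type} (G : CFG N) (X Y : N) : Prop :=
  G.Reaches X Y ∧ G.Reaches Y X

section Aux

variable {N : Type} (G : CFG N)

lemma CFG.step_append (l r : List (N ⊕ Bool)) {p q : List (N ⊕ Bool)}
    (h : G.Step p q) : G.Step (l ++ p ++ r) (l ++ q ++ r) := by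
  obtain ⟨l', r', X, w, hp, hw, hq⟩ := h
  exact ⟨l ++ l', r' ++ r, X, w, by simp [hp], hw, by simp [hq]⟩

lemma CFG.derives_append (l r : List (N ⊕ Bool)) {p q : List (N ⊕ Bool)}
    (h : G.Derives p q) : G.Derives (l ++ p ++ r) (l ++ q ++ r) := by
  induction h with
  | refl => exact Relation.ReflTransGen.refl
  | tail _ hstep ih => exact ih.tail (G.step_append l r hstep)

lemma CFG.derives_trans {p q r : List (N ⊕ Bool)} (h1 : G.Derives p q)
    (h2 : G.Derives q r) : G.Derives p r := Relation.ReflTransGen.trans h1 h2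

lemma CFG.derives_append₂ {p p' q q' : List (N ⊕ Bool)}
    (h1 : G.Derives p p') (h2 : G.Derives q q') : G.Derives (p ++ q) (p' ++ q') := by
  have a1 : G.Derives (p ++ q) (p' ++ q) := by
    simpa using G.derives_append [] q h1
  have a2 : G.Derives (p' ++ q) (p' ++ q') := by
    simpa using G.derives_append p' [] h2
  exact G.derives_trans a1 a2

lemma CFG.exists_word (hco : ∀ X : N, (G.langN X).Nonempty) (p : List (N ⊕ Bool)) :
    ∃ u : List Bool, G.Derives p (liftWord u) := by
  induction p with
  | nil => exact ⟨[], Relation.ReflTransGen.refl⟩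
  | cons x p ih =>
      obtain ⟨u, hu⟩ := ih
      cases x with
      | inl X =>
          obtain ⟨w, hw⟩ := hco X
          have hw' : G.Derives [Sum.inl X] (liftWord w) := hw
          refine ⟨w ++ u, ?_⟩
          have := G.derives_append₂ hw' hu
          simpa [liftWord_append] using this
      | inr b =>
          refine ⟨b :: u, ?_⟩
          have := G.derives_append₂ (Relation.ReflTransGen.refl
            (a := ([Sum.inr b] : List (N ⊕ Bool)))) hu
          simpa [liftWord] using this

lemma BranchLT.context {u v p s s' : List Bool} (h : BranchLT u v) :
    BranchLT (p ++ (u ++ s)) (p ++ (v ++ s')) := by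
  obtain ⟨w, a, b, u', v', hab, hu, hv⟩ := h
  exact ⟨p ++ w, a, b, u' ++ s, v' ++ s', hab, by simp [hu], by simp [hv]⟩

lemma list_trichotomy {A : Type*} (u v : List A) :
    u <+: v ∨ v <+: u ∨
      ∃ (w : List A) (a b : A) (u' v' : List A), a ≠ b ∧ u = w ++ a :: u' ∧ v = w ++ b :: v' := by
  induction u generalizing v with
  | nil => exact Or.inl List.nil_prefix
  | cons x u ih =>
      cases v with
      | nil => exact Or.inr (Or.inl List.nil_prefix)
      | cons y v =>
          by_cases hxy : x = y
          · subst hxy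
            rcases ih v with h | h | ⟨w, a, b, u', v', hab, hu, hv⟩
            · exact Or.inl (List.cons_prefix_cons.mpr ⟨rfl, h⟩)
            · exact Or.inr (Or.inl (List.cons_prefix_cons.mpr ⟨rfl, h⟩))
            · exact Or.inr (Or.inr ⟨x :: w, a, b, u', v', hab, by simp [hu], by simp [hv]⟩)
          · exact Or.inr (Or.inr ⟨[], x, y, u, v, hxy, rfl, rfl⟩)

lemma branch_of_ne {L : Set (List Bool)} (hpre : IsPrefixLang L)
    {u v : List Bool} (hu : u ∈ L) (hv : v ∈ L) (hne : u ≠ v) :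
    BranchLT u v ∨ BranchLT v u := by
  rcases list_trichotomy u v with ⟨t, rfl⟩ | ⟨t, rfl⟩ | ⟨w, a, b, u', v', hab, hu', hv'⟩
  · exact absurd (by rw [hpre u hu t hv, List.append_nil]) hne
  · exact absurd (by rw [hpre v hv t hu, List.append_nil]) hne.symm
  · rcases lt_or_gt_of_ne hab with h | h
    · exact Or.inl ⟨w, a, b, u', v', h, hu', hv'⟩
    · exact Or.inr ⟨w, b, a, v', u', h, hv', hu'⟩

lemma core_pump {N : Type} (G : CFG N) (X : N)
    (hwf : WellFounded (subLex (G.langN G.start)))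
    (a0 c0 : List Bool) (hstart : ∀ t ∈ G.langN X, a0 ++ (t ++ c0) ∈ G.langN G.start)
    (a b c : List Bool)
    (hpump : ∀ t1 ∈ G.langN X, ∀ t2 ∈ G.langN X, a ++ (t1 ++ (b ++ (t2 ++ c))) ∈ G.langN X)
    (u v : List Bool) (hu : u ∈ G.langN X) (hv : v ∈ G.langN X)
    (hbr : BranchLT u v) : False := by
  let t : ℕ → List Bool := fun n => Nat.rec (a ++ (v ++ (b ++ (u ++ c))))
    (fun _ tn => a ++ (u ++ (b ++ (tn ++ c)))) n
  have hmem : ∀ n, t n ∈ G.langN X := by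
    intro n
    induction n with
    | zero => exact hpump v hv u hu
    | succ n ih => exact hpump u hu (t n) ih
  have hdec : ∀ n, BranchLT (t (n + 1)) (t n) := by
    intro n
    induction n with
    | zero => exact hbr.context
    | succ n ih =>
        have h2 := ih.context (p := a ++ (u ++ b)) (s := c) (s' := c)
        simpa [t, List.append_assoc] using h2
  let seq : ℕ → ↥(G.langN G.start) := fun n => ⟨a0 ++ (t n ++ c0), hstart _ (hmem n)⟩
  have hsdec : ∀ n, subLex (G.langN G.start) (seq (n + 1)) (seq n) :=
    fun n => Or.inr ((hdec n).context)
  obtain ⟨x, ⟨n, rfl⟩, hmin⟩ := hwf.has_min (Set.range seq) ⟨seq 0, ⟨0, rfl⟩⟩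
  exact hmin (seq (n + 1)) ⟨n + 1, rfl⟩ (hsdec n)

end Aux

/-- In an ordinal grammar where each L(X) has at least two words, no
sentential form derivable from X can contain two occurrences of
nonterminals equivalent to X: from X ⇒* q·Y·r·Z·s with Y ≈ X and Z ≈ X a
contradiction follows. -/
theorem stmt19 {N : Type} (G : CFG N)
    (hacc : ∀ X : N, G.Accessible X)
    (hco : ∀ X : N, (G.langN X).Nonempty)
    (hpre : ∀ X : N, IsPrefixLang (G.langN X))
    (htwo : ∀ X : N, ∃ u v : List Bool, u ∈ G.langN X ∧ v ∈ G.langN X ∧ u ≠ v)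
    (hwo : IsWellOrder ↥(G.langN G.start) (subLex (G.langN G.start)))
    (X Y Z : N) (q r s : List (N ⊕ Bool))
    (hder : G.Derives [Sum.inl X] (q ++ Sum.inl Y :: r ++ Sum.inl Z :: s))
    (hY : G.Equiv X Y) (hZ : G.Equiv X Z) :
    False := by
  obtain ⟨p1, q1, d1⟩ := hY.2
  obtain ⟨p2, q2, d2⟩ := hZ.2
  -- replace Y and Z by contexts containing X
  have step1 : G.Derives (q ++ Sum.inl Y :: r ++ Sum.inl Z :: s)
      (q ++ (p1 ++ Sum.inl X :: q1) ++ r ++ Sum.inl Z :: s) := by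
    simpa using G.derives_append q (r ++ Sum.inl Z :: s) d1
  have step2 : G.Derives (q ++ (p1 ++ Sum.inl X :: q1) ++ r ++ Sum.inl Z :: s)
      (q ++ (p1 ++ Sum.inl X :: q1) ++ r ++ (p2 ++ Sum.inl X :: q2) ++ s) := by
    simpa using G.derives_append (q ++ (p1 ++ Sum.inl X :: q1) ++ r) s d2
  have hdd := G.derives_trans (G.derives_trans hder step1) step2
  -- derive the contexts to terminal words
  obtain ⟨a, ha⟩ := G.exists_word hco (q ++ p1)
  obtain ⟨b, hb⟩ := G.exists_word hco (q1 ++ r ++ p2)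
  obtain ⟨c, hc⟩ := G.exists_word hco (q2 ++ s)
  have step3 : G.Derives (q ++ (p1 ++ Sum.inl X :: q1) ++ r ++ (p2 ++ Sum.inl X :: q2) ++ s)
      (liftWord a ++ Sum.inl X :: liftWord b ++ Sum.inl X :: liftWord c) := by
    have := G.derives_append₂ ha (G.derives_append₂
      (Relation.ReflTransGen.refl (a := ([Sum.inl X] : List (N ⊕ Bool))))
      (G.derives_append₂ hb (G.derives_append₂
        (Relation.ReflTransGen.refl (a := ([Sum.inl X] : List (N ⊕ Bool)))) hc)))
    simpa using this
  have hXX : G.Derives [Sum.inl X]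
      (liftWord a ++ Sum.inl X :: liftWord b ++ Sum.inl X :: liftWord c) :=
    G.derives_trans hdd step3
  have hpump : ∀ t1 ∈ G.langN X, ∀ t2 ∈ G.langN X,
      a ++ (t1 ++ (b ++ (t2 ++ c))) ∈ G.langN X := by
    intro t1 ht1 t2 ht2
    have h1 : G.Derives [Sum.inl X] (liftWord t1) := ht1
    have h2 : G.Derives [Sum.inl X] (liftWord t2) := ht2
    have hmid : G.Derives
        (liftWord a ++ Sum.inl X :: liftWord b ++ Sum.inl X :: liftWord c)
        (liftWord (a ++ (t1 ++ (b ++ (t2 ++ c)))) : List (N ⊕ Bool)) := by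
      have := G.derives_append₂ (Relation.ReflTransGen.refl (a := (liftWord a : List (N ⊕ Bool))))
        (G.derives_append₂ h1 (G.derives_append₂
          (Relation.ReflTransGen.refl (a := (liftWord b : List (N ⊕ Bool))))
          (G.derives_append₂ h2
            (Relation.ReflTransGen.refl (a := (liftWord c : List (N ⊕ Bool)))))))
      simpa [liftWord_append] using this
    exact G.derives_trans hXX hmid
  -- accessibility gives a terminal context around X from the start symbol
  obtain ⟨qa, ra, dacc⟩ := hacc X
  obtain ⟨a0, ha0⟩ := G.exists_word hco qa
  obtain ⟨c0, hc0⟩ := G.exists_word hco ra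
  have hSX : G.Derives [Sum.inl G.start] (liftWord a0 ++ Sum.inl X :: liftWord c0) := by
    refine G.derives_trans dacc ?_
    have := G.derives_append₂ ha0 (G.derives_append₂
      (Relation.ReflTransGen.refl (a := ([Sum.inl X] : List (N ⊕ Bool)))) hc0)
    simpa using this
  have hstart : ∀ t ∈ G.langN X, a0 ++ (t ++ c0) ∈ G.langN G.start := by
    intro t ht
    have h1 : G.Derives [Sum.inl X] (liftWord t) := ht
    have hmid : G.Derives (liftWord a0 ++ Sum.inl X :: liftWord c0)
        (liftWord (a0 ++ (t ++ c0)) : List (N ⊕ Bool)) := by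
      have := G.derives_append₂ (Relation.ReflTransGen.refl (a := (liftWord a0 : List (N ⊕ Bool))))
        (G.derives_append₂ h1
          (Relation.ReflTransGen.refl (a := (liftWord c0 : List (N ⊕ Bool)))))
      simpa [liftWord_append] using this
    exact G.derives_trans hSX hmid
  obtain ⟨u, v, hu, hv, hne⟩ := htwo X
  have hwf : WellFounded (subLex (G.langN G.start)) := hwo.wf
  rcases branch_of_ne (hpre X) hu hv hne with hbr | hbr
  · exact core_pump G X hwf a0 c0 hstart a b c hpump u v hu hv hbr
  · exact core_pump G X hwf a0 c0 hstart a b c hpump v u hv hu hbr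
end
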